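/- Measure-many fairness: let B be a BSCC of a quantum Markov chain (H, E), X a nonzero subspace of B, and define Ẽ(ρ) = P_{X^⊥} E(ρ) P_{X^⊥} where X^⊥ is the ortho-complement of X in H. Then for every |ψ⟩ ∈ B, lim_{i→∞} tr(Ẽ^i(|ψ⟩⟨ψ|)) = 0. -/

import Mathlib

open Matrix Filter Topology
open scoped ComplexOrder

/-- The matrix of the orthogonal projection onto a subspace `X`. -/
noncomputable def projMat {d : ℕ} (X : Submodule ℂ (EuclideanSpace ℂ (Fin d))) :
    Matrix (Fin d) (Fin d) ℂ :=
  Matrix.toEuclideanLin.symm ((X.subtypeL.comp (Submodule.orthogonalProjection X)).toLinearMap)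

/-- The support of an operator: the range of the associated linear map. -/
noncomputable def matSupp {d : ℕ} (A : Matrix (Fin d) (Fin d) ℂ) :
    Submodule ℂ (EuclideanSpace ℂ (Fin d)) :=
  LinearMap.range (Matrix.toEuclideanLin A)

/-- The outer product `|v⟩⟨v|`. -/
noncomputable def outer {d : ℕ} (v : EuclideanSpace ℂ (Fin d)) : Matrix (Fin d) (Fin d) ℂ :=
  fun i j => v i * star (v j)

/-- The completely positive map `A ↦ ∑ i, E i * A * (E i)†` given by Kraus operators `E`. -/
noncomputable def krausMap {d m : ℕ} (E : Fin m → Matrix (Fin d) (Fin d) ℂ)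
    (A : Matrix (Fin d) (Fin d) ℂ) : Matrix (Fin d) (Fin d) ℂ :=
  ∑ i, E i * A * (E i)ᴴ

/-- The reachable space of a state `ρ`: the join of the supports of all iterates. -/
noncomputable def Reach {d m : ℕ} (E : Fin m → Matrix (Fin d) (Fin d) ℂ)
    (ρ : Matrix (Fin d) (Fin d) ℂ) : Submodule ℂ (EuclideanSpace ℂ (Fin d)) :=
  ⨆ n : ℕ, matSupp ((krausMap E)^[n] ρ)

/-- A BSCC: a nonzero invariant subspace `B` such that the reachable space of every
nonzero vector of `B` is exactly `B`. -/
noncomputable def IsBSCC {d m : ℕ} (E : Fin m → Matrix (Fin d) (Fin d) ℂ)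
    (B : Submodule ℂ (EuclideanSpace ℂ (Fin d))) : Prop :=
  B ≠ ⊥ ∧
  (∀ ρ : Matrix (Fin d) (Fin d) ℂ, ρ.PosSemidef → matSupp ρ ≤ B →
      matSupp (krausMap E ρ) ≤ B) ∧
  (∀ v : EuclideanSpace ℂ (Fin d), v ∈ B → v ≠ 0 → Reach E (outer v) = B)

variable {d : ℕ}

lemma diag_nonneg {A : Matrix (Fin d) (Fin d) ℂ} (hA : A.PosSemidef) (i : Fin d) :
    0 ≤ A i i := by
  have := hA.dotProduct_mulVec_nonneg (Pi.single i 1)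
  simpa [Matrix.mulVec_single, dotProduct, Pi.single_apply, Finset.sum_ite_eq'] using this

lemma psd_trace_nonneg {A : Matrix (Fin d) (Fin d) ℂ} (hA : A.PosSemidef) : 0 ≤ A.trace :=
  Finset.sum_nonneg fun i _ => diag_nonneg hA i

lemma psd_trace_real {A : Matrix (Fin d) (Fin d) ℂ} (hA : A.PosSemidef) :
    A.trace = (A.trace.re : ℂ) := by
  have h := psd_trace_nonneg hA
  rw [Complex.nonneg_iff] at h
  exact Complex.ext rfl (by simp [← h.2])

lemma psd_trace_mono {A B : Matrix (Fin d) (Fin d) ℂ} (h : (B - A).PosSemidef) :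
    A.trace.re ≤ B.trace.re := by
  have h2 := psd_trace_nonneg h
  rw [Complex.nonneg_iff] at h2
  have h3 : (B - A).trace = B.trace - A.trace := by simp [Matrix.trace_sub]
  rw [h3] at h2
  simpa using h2.1

open scoped MatrixOrder in
lemma psd_zero_of_trace {A : Matrix (Fin d) (Fin d) ℂ} (hA : A.PosSemidef)
    (h : A.trace = 0) : A = 0 := by
  obtain ⟨B, rfl⟩ : ∃ B : Matrix (Fin d) (Fin d) ℂ, A = Bᴴ * B :=
    ⟨CFC.sqrt A, by rw [(Matrix.nonneg_iff_posSemidef.mp (CFC.sqrt_nonneg A)).isHermitian.eq,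
      CFC.sqrt_mul_sqrt_self A hA.nonneg]⟩
  suffices hB : B = 0 by simp [hB]
  have hdiag : ∀ k, (Bᴴ * B) k k = 0 := by
    intro k
    exact Finset.sum_eq_zero_iff_of_nonneg (fun l _ => diag_nonneg hA l) |>.mp h k
      (Finset.mem_univ k)
  ext i j
  have := hdiag j
  rw [Matrix.mul_apply] at this
  have h2 : (star (fun k => B k j)) ⬝ᵥ (fun k => B k j) = 0 := by
    simpa [dotProduct, Matrix.conjTranspose_apply] using this
  have := dotProduct_star_self_eq_zero.mp h2
  exact congrFun this i

-- conj by a matrix of a psd zero lemma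
open scoped MatrixOrder in
lemma psd_conj_eq_zero {A Q : Matrix (Fin d) (Fin d) ℂ} (hA : A.PosSemidef)
    (hQ : Qᴴ = Q) (h : Q * A * Q = 0) : A * Q = 0 ∧ Q * A = 0 := by
  obtain ⟨B, rfl⟩ : ∃ B : Matrix (Fin d) (Fin d) ℂ, A = Bᴴ * B :=
    ⟨CFC.sqrt A, by rw [(Matrix.nonneg_iff_posSemidef.mp (CFC.sqrt_nonneg A)).isHermitian.eq,
      CFC.sqrt_mul_sqrt_self A hA.nonneg]⟩
  have h1 : (B * Q)ᴴ * (B * Q) = 0 := by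
    rw [Matrix.conjTranspose_mul, hQ]
    calc Q * Bᴴ * (B * Q) = Q * (Bᴴ * B) * Q := by simp [Matrix.mul_assoc]
    _ = 0 := h
  have h2 : B * Q = 0 := conjTranspose_mul_self_eq_zero.mp h1
  have hl : Bᴴ * B * Q = 0 := by
    calc Bᴴ * B * Q = Bᴴ * (B * Q) := by rw [Matrix.mul_assoc]
    _ = 0 := by rw [h2, Matrix.mul_zero]
  refine ⟨hl, ?_⟩
  have : (Bᴴ * B * Q)ᴴ = 0 := by rw [hl]; simp
  rwa [Matrix.conjTranspose_mul, Matrix.conjTranspose_mul, Matrix.conjTranspose_conjTranspose,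
    hQ] at this

variable {m : ℕ} {E : Fin m → Matrix (Fin d) (Fin d) ℂ}

lemma psd_sum {ι : Type*} (s : Finset ι) (f : ι → Matrix (Fin d) (Fin d) ℂ)
    (hf : ∀ i ∈ s, (f i).PosSemidef) : (∑ i ∈ s, f i).PosSemidef := by
  classical
  induction s using Finset.induction with
  | empty => simpa using Matrix.PosSemidef.zero
  | @insert a s' hx ih =>
    rw [Finset.sum_insert hx]
    exact ((hf a (Finset.mem_insert_self a s')).add
      (ih fun i hi => hf i (Finset.mem_insert_of_mem hi)))

lemma kraus_psd {A : Matrix (Fin d) (Fin d) ℂ} (hA : A.PosSemidef) :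
    (krausMap E A).PosSemidef :=
  psd_sum _ _ fun i _ => hA.mul_mul_conjTranspose_same (E i)

lemma kraus_add (A B : Matrix (Fin d) (Fin d) ℂ) :
    krausMap E (A + B) = krausMap E A + krausMap E B := by
  unfold krausMap
  rw [← Finset.sum_add_distrib]
  congr 1; ext i : 1
  rw [Matrix.mul_add, Matrix.add_mul]

lemma kraus_sub (A B : Matrix (Fin d) (Fin d) ℂ) :
    krausMap E (A - B) = krausMap E A - krausMap E B := by
  unfold krausMap
  rw [← Finset.sum_sub_distrib]
  congr 1; ext i : 1
  rw [Matrix.mul_sub, Matrix.sub_mul]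

lemma kraus_smul (c : ℂ) (A : Matrix (Fin d) (Fin d) ℂ) :
    krausMap E (c • A) = c • krausMap E A := by
  unfold krausMap
  rw [Finset.smul_sum]
  congr 1; ext i : 1
  rw [Matrix.mul_smul, Matrix.smul_mul]

lemma kraus_mono {A B : Matrix (Fin d) (Fin d) ℂ} (h : (B - A).PosSemidef) :
    (krausMap E B - krausMap E A).PosSemidef := by
  rw [← kraus_sub]; exact kraus_psd h

lemma kraus_trace (hE : ∑ i, (E i)ᴴ * E i = 1) (A : Matrix (Fin d) (Fin d) ℂ) :
    (krausMap E A).trace = A.trace := by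
  unfold krausMap
  rw [Matrix.trace_sum]
  have : ∀ i, (E i * A * (E i)ᴴ).trace = ((E i)ᴴ * E i * A).trace := by
    intro i
    rw [Matrix.trace_mul_cycle]
  simp_rw [this]
  calc (∑ i, ((E i)ᴴ * E i * A).trace) = ((∑ i, (E i)ᴴ * E i) * A).trace := by
        rw [Finset.sum_mul, Matrix.trace_sum]
  _ = A.trace := by rw [hE, Matrix.one_mul]

lemma kraus_iter_psd {A : Matrix (Fin d) (Fin d) ℂ} (hA : A.PosSemidef) (n : ℕ) :
    ((krausMap E)^[n] A).PosSemidef := by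
  induction n with
  | zero => simpa using hA
  | succ k ih => rw [Function.iterate_succ_apply']; exact kraus_psd ih

lemma kraus_iter_mono {A B : Matrix (Fin d) (Fin d) ℂ} (h : (B - A).PosSemidef) (n : ℕ) :
    ((krausMap E)^[n] B - (krausMap E)^[n] A).PosSemidef := by
  induction n with
  | zero => simpa using h
  | succ k ih =>
    rw [Function.iterate_succ_apply', Function.iterate_succ_apply']
    exact kraus_mono ih

lemma kraus_iter_smul (c : ℂ) (A : Matrix (Fin d) (Fin d) ℂ) (n : ℕ) :
    (krausMap E)^[n] (c • A) = c • (krausMap E)^[n] A := by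
  induction n with
  | zero => simp
  | succ k ih => rw [Function.iterate_succ_apply', Function.iterate_succ_apply', ih, kraus_smul]

-- ### Section 3: matSupp and projection lemmas

lemma mem_matSupp {A : Matrix (Fin d) (Fin d) ℂ} {y : EuclideanSpace ℂ (Fin d)} :
    y ∈ matSupp A ↔ ∃ x : Fin d → ℂ, (WithLp.equiv 2 (Fin d → ℂ)).symm (A *ᵥ x) = y := by
  constructor
  · rintro ⟨x, rfl⟩
    exact ⟨WithLp.equiv 2 _ x, rfl⟩
  · rintro ⟨x, rfl⟩
    exact ⟨(WithLp.equiv 2 _).symm x, rfl⟩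

lemma matSupp_le_iff {A : Matrix (Fin d) (Fin d) ℂ}
    {S : Submodule ℂ (EuclideanSpace ℂ (Fin d))} :
    matSupp A ≤ S ↔ ∀ x : Fin d → ℂ, (WithLp.equiv 2 (Fin d → ℂ)).symm (A *ᵥ x) ∈ S := by
  constructor
  · intro h x
    exact h (mem_matSupp.mpr ⟨x, rfl⟩)
  · rintro h y hy
    obtain ⟨x, rfl⟩ := mem_matSupp.mp hy
    exact h x

lemma toEuclideanLin_projMat (S : Submodule ℂ (EuclideanSpace ℂ (Fin d))) :
    Matrix.toEuclideanLin (projMat S) = (S.subtypeL.comp (Submodule.orthogonalProjection S)).toLinearMap :=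
  Matrix.toEuclideanLin.apply_symm_apply _

lemma projMat_apply (S : Submodule ℂ (EuclideanSpace ℂ (Fin d))) (y : EuclideanSpace ℂ (Fin d)) :
    Matrix.toEuclideanLin (projMat S) y = (Submodule.orthogonalProjection S y : EuclideanSpace ℂ (Fin d)) := by
  rw [toEuclideanLin_projMat]; rfl

lemma toEuclideanLin_mul (M N : Matrix (Fin d) (Fin d) ℂ) (y : EuclideanSpace ℂ (Fin d)) :
    Matrix.toEuclideanLin (M * N) y = Matrix.toEuclideanLin M (Matrix.toEuclideanLin N y) := by
  rw [Matrix.toEuclideanLin_apply, Matrix.toEuclideanLin_apply, Matrix.toEuclideanLin_apply]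
  simp [← Matrix.mulVec_mulVec]

lemma projMat_hermitian (S : Submodule ℂ (EuclideanSpace ℂ (Fin d))) :
    (projMat S).IsHermitian := by
  rw [Matrix.isHermitian_iff_isSymmetric, toEuclideanLin_projMat]
  exact Submodule.starProjection_isSymmetric (K := S)

lemma projMat_idem (S : Submodule ℂ (EuclideanSpace ℂ (Fin d))) :
    projMat S * projMat S = projMat S := by
  apply Matrix.toEuclideanLin.injective
  apply LinearMap.ext
  intro y
  rw [toEuclideanLin_mul, projMat_apply, projMat_apply]
  exact (Submodule.starProjection_eq_self_iff (K := S)).mpr (SetLike.coe_mem _)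

lemma projMat_psd (S : Submodule ℂ (EuclideanSpace ℂ (Fin d))) :
    (projMat S).PosSemidef := by
  have h : projMat S = (projMat S)ᴴ * projMat S := by
    rw [(projMat_hermitian S).eq, projMat_idem]
  rw [h]
  exact Matrix.posSemidef_conjTranspose_mul_self _

lemma projMat_add_orthogonal (S : Submodule ℂ (EuclideanSpace ℂ (Fin d))) :
    projMat S + projMat Sᗮ = 1 := by
  apply Matrix.toEuclideanLin.injective
  apply LinearMap.ext
  intro y
  rw [map_add, LinearMap.add_apply, projMat_apply, projMat_apply]
  have h := Submodule.starProjection_add_starProjection_orthogonal (K := S) y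
  have h1 : Matrix.toEuclideanLin (1 : Matrix (Fin d) (Fin d) ℂ) y = y := by
    rw [Matrix.toEuclideanLin_apply, Matrix.one_mulVec]
  rw [h1]
  exact h

lemma projMat_mul_eq_self_iff {S : Submodule ℂ (EuclideanSpace ℂ (Fin d))}
    {M : Matrix (Fin d) (Fin d) ℂ} :
    projMat S * M = M ↔ matSupp M ≤ S := by
  constructor
  · intro h
    rintro y hy
    obtain ⟨x, rfl⟩ := mem_matSupp.mp hy
    have : (WithLp.equiv 2 (Fin d → ℂ)).symm (M *ᵥ x)
        = Matrix.toEuclideanLin (projMat S * M) ((WithLp.equiv 2 (Fin d → ℂ)).symm x) := by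
      rw [h]; rfl
    rw [this, toEuclideanLin_mul, projMat_apply]
    exact SetLike.coe_mem _
  · intro h
    apply Matrix.toEuclideanLin.injective
    apply LinearMap.ext
    intro y
    rw [toEuclideanLin_mul, projMat_apply]
    exact (Submodule.starProjection_eq_self_iff (K := S)).mpr (h ⟨y, rfl⟩)

lemma matSupp_le_orthogonal_of_projMat_mul_eq_zero {S : Submodule ℂ (EuclideanSpace ℂ (Fin d))}
    {M : Matrix (Fin d) (Fin d) ℂ} (h : projMat S * M = 0) :
    matSupp M ≤ Sᗮ := by
  rintro y hy
  obtain ⟨x, rfl⟩ := mem_matSupp.mp hy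
  rw [← Submodule.orthogonalProjectionOnto_eq_zero_iff]
  have h2 : Matrix.toEuclideanLin (projMat S * M) ((WithLp.equiv 2 (Fin d → ℂ)).symm x) = 0 := by
    rw [h]; simp
  rw [toEuclideanLin_mul, projMat_apply] at h2
  have h3 : Matrix.toEuclideanLin M ((WithLp.equiv 2 (Fin d → ℂ)).symm x)
      = (WithLp.equiv 2 (Fin d → ℂ)).symm (M *ᵥ x) := rfl
  rw [h3] at h2
  exact Subtype.coe_injective (by simpa using h2)

lemma hermitian_matSupp {A : Matrix (Fin d) (Fin d) ℂ} (hA : A.IsHermitian) :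
    matSupp A = (LinearMap.ker (Matrix.toEuclideanLin A))ᗮ := by
  have hsym : (Matrix.toEuclideanLin A).IsSymmetric := Matrix.isHermitian_iff_isSymmetric.mp hA
  apply Submodule.eq_of_le_of_finrank_eq
  · rintro y ⟨x, rfl⟩
    rw [Submodule.mem_orthogonal]
    intro u hu
    rw [LinearMap.mem_ker] at hu
    rw [← hsym u x, hu]
    simp
  · have h1 := LinearMap.finrank_range_add_finrank_ker (Matrix.toEuclideanLin A)
    have h2 := Submodule.finrank_add_finrank_orthogonal
      (K := LinearMap.ker (Matrix.toEuclideanLin A)) (𝕜 := ℂ)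
    have h0 : matSupp A = LinearMap.range (Matrix.toEuclideanLin A) := rfl
    rw [h0]
    omega

lemma psd_matSupp_le_of_le {A B : Matrix (Fin d) (Fin d) ℂ} (hA : A.PosSemidef)
    (hB : B.PosSemidef) (hAB : (B - A).PosSemidef) : matSupp A ≤ matSupp B := by
  rw [hermitian_matSupp hA.isHermitian, hermitian_matSupp hB.isHermitian]
  apply Submodule.orthogonal_le
  rintro y hy
  rw [LinearMap.mem_ker] at hy ⊢
  have hyv : B *ᵥ (WithLp.equiv 2 (Fin d → ℂ) y) = 0 := by
    have := congrArg (WithLp.equiv 2 (Fin d → ℂ)) hy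
    simpa [Matrix.toEuclideanLin_apply] using this
  set x : Fin d → ℂ := WithLp.equiv 2 (Fin d → ℂ) y with hx
  have h1 : star x ⬝ᵥ B *ᵥ x = 0 := by rw [hyv]; simp
  have h2 : 0 ≤ star x ⬝ᵥ (B - A) *ᵥ x := hAB.dotProduct_mulVec_nonneg x
  have h3 : star x ⬝ᵥ (B - A) *ᵥ x = star x ⬝ᵥ B *ᵥ x - star x ⬝ᵥ A *ᵥ x := by
    rw [Matrix.sub_mulVec, dotProduct_sub]
  rw [h3, h1, zero_sub] at h2
  have h4 : star x ⬝ᵥ A *ᵥ x = 0 := le_antisymm (by simpa using neg_nonneg.mp (by simpa using h2)) (hA.dotProduct_mulVec_nonneg x)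
  have h5 : A *ᵥ x = 0 := (hA.dotProduct_mulVec_zero_iff x).mp h4
  have : Matrix.toEuclideanLin A y = (WithLp.equiv 2 (Fin d → ℂ)).symm (A *ᵥ x) := rfl
  rw [this, h5]
  simp

lemma matSupp_smul {A : Matrix (Fin d) (Fin d) ℂ} {c : ℂ} (hc : c ≠ 0) :
    matSupp (c • A) = matSupp A := by
  apply le_antisymm
  · rintro y hy
    obtain ⟨x, rfl⟩ := mem_matSupp.mp hy
    exact mem_matSupp.mpr ⟨c • x, by rw [Matrix.smul_mulVec, Matrix.mulVec_smul]⟩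
  · rintro y hy
    obtain ⟨x, rfl⟩ := mem_matSupp.mp hy
    refine mem_matSupp.mpr ⟨c⁻¹ • x, ?_⟩
    rw [Matrix.smul_mulVec, Matrix.mulVec_smul, smul_smul, mul_inv_cancel₀ hc, one_smul]

-- ### Section 5: outer product lemmas

lemma dot_eq_inner (a b : Fin d → ℂ) :
    star a ⬝ᵥ b = (inner ℂ ((WithLp.equiv 2 (Fin d → ℂ)).symm a)
      ((WithLp.equiv 2 (Fin d → ℂ)).symm b) : ℂ) := by
  simp [dotProduct, PiLp.inner_apply, RCLike.inner_apply, mul_comm]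

lemma outer_mulVec (v : EuclideanSpace ℂ (Fin d)) (x : Fin d → ℂ) :
    outer v *ᵥ x = (star (fun j => v j) ⬝ᵥ x) • (fun i => v i) := by
  ext i
  simp [outer, Matrix.mulVec, dotProduct, Finset.mul_sum, Pi.smul_apply, smul_eq_mul,
    mul_assoc, mul_comm, mul_left_comm]

lemma outer_psd (v : EuclideanSpace ℂ (Fin d)) : (outer v).PosSemidef := by
  refine Matrix.PosSemidef.of_dotProduct_mulVec_nonneg ?_ ?_
  · ext i j
    simp [outer, Matrix.conjTranspose_apply, mul_comm]
  · intro x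
    rw [outer_mulVec, dotProduct_smul]
    have h1 : star x ⬝ᵥ (fun i => v i) = star (star (fun j => v j) ⬝ᵥ x) := by
      simp [dotProduct, mul_comm]
    rw [smul_eq_mul, h1]
    exact mul_star_self_nonneg _

lemma matSupp_outer_le {v : EuclideanSpace ℂ (Fin d)}
    {S : Submodule ℂ (EuclideanSpace ℂ (Fin d))} (hv : v ∈ S) : matSupp (outer v) ≤ S := by
  rw [matSupp_le_iff]
  intro x
  rw [outer_mulVec]
  have : (WithLp.equiv 2 (Fin d → ℂ)).symm ((star (fun j => v j) ⬝ᵥ x) • (fun i => v i))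
      = (star (fun j => v j) ⬝ᵥ x) • v := rfl
  rw [this]
  exact S.smul_mem _ hv

-- ### Section 6: Cauchy–Schwarz domination lemma

open scoped MatrixOrder in
lemma outer_le_smul {A : Matrix (Fin d) (Fin d) ℂ} (hA : A.PosSemidef)
    {v : EuclideanSpace ℂ (Fin d)} (hv : v ∈ matSupp A) (hv0 : v ≠ 0) :
    ∃ c : ℂ, c ≠ 0 ∧ 0 ≤ c ∧ (c • A - outer v).PosSemidef := by
  classical
  obtain ⟨w, hw⟩ := mem_matSupp.mp hv
  set S := CFC.sqrt A with hSdef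
  have hSpsd : S.PosSemidef := Matrix.nonneg_iff_posSemidef.mp (CFC.sqrt_nonneg A)
  have hSh : Sᴴ = S := hSpsd.isHermitian.eq
  have hmul : S * S = A := CFC.sqrt_mul_sqrt_self A hA.nonneg
  set u : Fin d → ℂ := S *ᵥ w with hu
  have hvu : (fun i => v i) = S *ᵥ u := by
    have h1 : (fun i => v i) = A *ᵥ w := by
      funext i
      exact (congrFun (congrArg (WithLp.equiv 2 (Fin d → ℂ)) hw) i).symm
    rw [h1, ← hmul, ← Matrix.mulVec_mulVec]
  have hu0 : u ≠ 0 := by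
    intro h
    apply hv0
    have : (fun i => v i) = (0 : Fin d → ℂ) := by rw [hvu, h, Matrix.mulVec_zero]
    ext i
    exact congrFun this i
  set c : ℂ := star u ⬝ᵥ u with hc
  have hc0 : c ≠ 0 := fun h => hu0 (dotProduct_star_self_eq_zero.mp h)
  have hcreal : star c = c := by
    have h := dotProduct_star_self_nonneg u
    rw [Complex.nonneg_iff] at h
    rw [← hc] at h
    exact Complex.ext (by simp) (by simp [← h.2])
  refine ⟨c, hc0, dotProduct_star_self_nonneg u, Matrix.PosSemidef.of_dotProduct_mulVec_nonneg ?_ ?_⟩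
  · show (c • A - outer v)ᴴ = c • A - outer v
    rw [Matrix.conjTranspose_sub, Matrix.conjTranspose_smul, hA.isHermitian.eq,
      (outer_psd v).isHermitian.eq, hcreal]
  · intro x
    set y : Fin d → ℂ := S *ᵥ x with hy
    have hAx : star x ⬝ᵥ A *ᵥ x = star y ⬝ᵥ y := by
      rw [← hmul, ← Matrix.mulVec_mulVec, Matrix.dotProduct_mulVec]
      congr 1
      rw [hy, Matrix.star_mulVec, hSh]
    set t : ℂ := star u ⬝ᵥ y with ht
    have hvf : star (fun j => v j) ⬝ᵥ x = t := by
      rw [hvu, Matrix.star_mulVec, hSh, ← Matrix.dotProduct_mulVec]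
    have houter : star x ⬝ᵥ outer v *ᵥ x = t * star t := by
      rw [outer_mulVec, dotProduct_smul, smul_eq_mul, hvf]
      congr 1
      rw [← hvf]
      simp [dotProduct, mul_comm]
    have hexpand : star x ⬝ᵥ (c • A - outer v) *ᵥ x
        = c * (star y ⬝ᵥ y) - t * star t := by
      rw [Matrix.sub_mulVec, dotProduct_sub, houter, Matrix.smul_mulVec,
        dotProduct_smul, smul_eq_mul, hAx]
    rw [hexpand]
    -- translate to inner products
    set U : EuclideanSpace ℂ (Fin d) := (WithLp.equiv 2 (Fin d → ℂ)).symm u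
    set Y : EuclideanSpace ℂ (Fin d) := (WithLp.equiv 2 (Fin d → ℂ)).symm y
    have hcU : c = (‖U‖ : ℂ)^2 := by
      rw [hc, dot_eq_inner]
      exact inner_self_eq_norm_sq_to_K U
    have hyY : star y ⬝ᵥ y = (‖Y‖ : ℂ)^2 := by
      rw [dot_eq_inner]
      exact inner_self_eq_norm_sq_to_K Y
    have htUY : t = inner ℂ U Y := by rw [ht, dot_eq_inner]
    have htt : t * star t = ((‖t‖^2 : ℝ) : ℂ) := by
      rw [show (star t) = (starRingEnd ℂ) t from rfl, Complex.mul_conj]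
      norm_cast
      rw [Complex.normSq_eq_norm_sq]
    rw [hcU, hyY, htt]
    have hCS : ‖t‖ ≤ ‖U‖ * ‖Y‖ := by
      rw [htUY]
      exact norm_inner_le_norm U Y
    have hfinal : (0:ℝ) ≤ ‖U‖^2 * ‖Y‖^2 - ‖t‖^2 := by
      have h2 : ‖t‖^2 ≤ (‖U‖ * ‖Y‖)^2 := by
        apply pow_le_pow_left₀ (norm_nonneg _) hCS
      nlinarith
    have : (‖U‖:ℂ)^2 * (‖Y‖:ℂ)^2 - ((‖t‖^2 : ℝ):ℂ) = ((‖U‖^2 * ‖Y‖^2 - ‖t‖^2 : ℝ) : ℂ) := by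
      push_cast
      ring
    rw [this]
    exact Complex.zero_le_real.mpr hfinal

-- ### Section 7: entry bounds and continuity

lemma psd_diag_re_le_trace {A : Matrix (Fin d) (Fin d) ℂ} (hA : A.PosSemidef) (i : Fin d) :
    (A i i).re ≤ A.trace.re := by
  have h : A.trace.re = ∑ k, (A k k).re := by
    rw [Matrix.trace]
    exact Complex.re_sum _ _
  rw [h]
  exact Finset.single_le_sum (f := fun k => (A k k).re)
    (fun k _ => by have := diag_nonneg hA k; rw [Complex.nonneg_iff] at this; exact this.1)
    (Finset.mem_univ i)

open scoped MatrixOrder in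
lemma psd_entry_norm_le {A : Matrix (Fin d) (Fin d) ℂ} (hA : A.PosSemidef) (i j : Fin d) :
    ‖A i j‖ ≤ A.trace.re := by
  classical
  set S := CFC.sqrt A with hSdef
  have hSh : Sᴴ = S := (Matrix.nonneg_iff_posSemidef.mp (CFC.sqrt_nonneg A)).isHermitian.eq
  have hmul : S * S = A := CFC.sqrt_mul_sqrt_self A hA.nonneg
  set col : Fin d → Fin d → ℂ := fun k l => S l k with hcol
  have hentry : ∀ k k' : Fin d, A k k' = star (col k) ⬝ᵥ col k' := by
    intro k k'
    rw [← hmul, Matrix.mul_apply]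
    congr 1
    funext l
    have : S k l = star (S l k) := by
      conv_lhs => rw [← hSh]
      rfl
    rw [this]
    rfl
  set C : Fin d → EuclideanSpace ℂ (Fin d) := fun k => (WithLp.equiv 2 (Fin d → ℂ)).symm (col k)
  have hinner : ∀ k k', A k k' = (inner ℂ (C k) (C k') : ℂ) := by
    intro k k'
    rw [hentry, dot_eq_inner]
  have hnorm : ∀ k, ‖C k‖^2 = (A k k).re := by
    intro k
    have := hinner k k
    rw [inner_self_eq_norm_sq_to_K (𝕜 := ℂ) (C k)] at this
    have h2 := congrArg Complex.re this
    rw [h2]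
    norm_cast
  have hCS : ‖A i j‖ ≤ ‖C i‖ * ‖C j‖ := by
    rw [hinner i j]
    exact norm_inner_le_norm _ _
  have hi := hnorm i
  have hj := hnorm j
  have hit := psd_diag_re_le_trace hA i
  have hjt := psd_diag_re_le_trace hA j
  nlinarith [sq_nonneg (‖C i‖ - ‖C j‖), norm_nonneg (C i), norm_nonneg (C j)]

lemma kraus_continuous : Continuous (krausMap E) := by
  unfold krausMap
  exact continuous_finset_sum _ fun i _ =>
    (continuous_const.matrix_mul continuous_id).matrix_mul continuous_const

lemma F_continuous (P : Matrix (Fin d) (Fin d) ℂ) :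
    Continuous (fun A : Matrix (Fin d) (Fin d) ℂ => P * krausMap E A * P) :=
  (continuous_const.matrix_mul kraus_continuous).matrix_mul continuous_const

lemma F_iter_continuous (P : Matrix (Fin d) (Fin d) ℂ) (n : ℕ) :
    Continuous ((fun A : Matrix (Fin d) (Fin d) ℂ => P * krausMap E A * P)^[n]) := by
  induction n with
  | zero => simpa using continuous_id
  | succ k ih =>
    rw [Function.iterate_succ]
    exact ih.comp (F_continuous P)

lemma psd_smul_nonneg {A : Matrix (Fin d) (Fin d) ℂ} (hA : A.PosSemidef) {c : ℂ}
    (hc : 0 ≤ c) : (c • A).PosSemidef := by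
  have hcr : star c = c := by
    rw [Complex.nonneg_iff] at hc
    exact Complex.ext (by simp) (by simp [← hc.2])
  refine Matrix.PosSemidef.of_dotProduct_mulVec_nonneg ?_ ?_
  · show (c • A)ᴴ = c • A
    rw [Matrix.conjTranspose_smul, hA.isHermitian.eq, hcr]
  · intro x
    rw [Matrix.smul_mulVec, dotProduct_smul, smul_eq_mul]
    exact mul_nonneg hc (hA.dotProduct_mulVec_nonneg x)

lemma toEuclideanLin_one (y : EuclideanSpace ℂ (Fin d)) :
    Matrix.toEuclideanLin (1 : Matrix (Fin d) (Fin d) ℂ) y = y := by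
  rw [Matrix.toEuclideanLin_apply, Matrix.one_mulVec]

lemma matSupp_PNP_le {X B : Submodule ℂ (EuclideanSpace ℂ (Fin d))} (hXB : X ≤ B)
    {N : Matrix (Fin d) (Fin d) ℂ} (hN : matSupp N ≤ B) :
    matSupp (projMat Xᗮ * N * projMat Xᗮ) ≤ B := by
  rw [matSupp_le_iff]
  intro x
  have h1 : (projMat Xᗮ * N * projMat Xᗮ) *ᵥ x
      = projMat Xᗮ *ᵥ (N *ᵥ (projMat Xᗮ *ᵥ x)) := by
    rw [Matrix.mulVec_mulVec, Matrix.mulVec_mulVec]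
  rw [h1]
  set z : EuclideanSpace ℂ (Fin d) :=
    (WithLp.equiv 2 (Fin d → ℂ)).symm (N *ᵥ (projMat Xᗮ *ᵥ x)) with hz
  have hzB : z ∈ B := hN (mem_matSupp.mpr ⟨_, rfl⟩)
  have key : (WithLp.equiv 2 (Fin d → ℂ)).symm (projMat Xᗮ *ᵥ (N *ᵥ (projMat Xᗮ *ᵥ x)))
      = Matrix.toEuclideanLin (projMat Xᗮ) z := rfl
  rw [key]
  have hsum : Matrix.toEuclideanLin (projMat X) z + Matrix.toEuclideanLin (projMat Xᗮ) z = z := by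
    have := congrArg (fun M => Matrix.toEuclideanLin M z) (projMat_add_orthogonal X)
    simpa [toEuclideanLin_one] using this
  have hQz : Matrix.toEuclideanLin (projMat X) z ∈ B := by
    rw [projMat_apply]
    exact hXB (SetLike.coe_mem _)
  have heq : Matrix.toEuclideanLin (projMat Xᗮ) z = z - Matrix.toEuclideanLin (projMat X) z :=
    eq_sub_of_add_eq' hsum
  rw [heq]
  exact B.sub_mem hzB hQz

/-- Measure-many fairness: absorbing at a nonzero subspace of a BSCC, the
non-absorbed probability vanishes for any initial pure state in the BSCC. -/
theorem stmt18 {d m : ℕ} (E : Fin m → Matrix (Fin d) (Fin d) ℂ)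
    (hE : ∑ i, (E i)ᴴ * E i = 1)
    (B X : Submodule ℂ (EuclideanSpace ℂ (Fin d))) (hB : IsBSCC E B) (hXB : X ≤ B) (hX : X ≠ ⊥) :
    ∀ ψ : EuclideanSpace ℂ (Fin d), ψ ∈ B →
      Tendsto
        (fun i : ℕ => ((fun A : Matrix (Fin d) (Fin d) ℂ => projMat Xᗮ * krausMap E A * projMat Xᗮ)^[i] (outer ψ)).trace)
        atTop (nhds 0) := by
  intro ψ hψ
  classical
  set P : Matrix (Fin d) (Fin d) ℂ := projMat Xᗮ with hPdef
  set Q : Matrix (Fin d) (Fin d) ℂ := projMat X with hQdef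
  set F := fun A : Matrix (Fin d) (Fin d) ℂ => P * krausMap E A * P with hFdef
  set ρ : ℕ → Matrix (Fin d) (Fin d) ℂ := fun i => F^[i] (outer ψ) with hρdef
  have hPQ : Q + P = 1 := projMat_add_orthogonal X
  have hPh : Pᴴ = P := (projMat_hermitian _).eq
  have hQh : Qᴴ = Q := (projMat_hermitian _).eq
  have hPP : P * P = P := projMat_idem _
  have hQQ : Q * Q = Q := projMat_idem _
  have htr_split : ∀ M : Matrix (Fin d) (Fin d) ℂ,
      (P * M * P).trace + (Q * M * Q).trace = M.trace := by
    intro M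
    have h1 : (P * M * P).trace = (M * P).trace := by
      rw [Matrix.trace_mul_cycle, hPP, Matrix.trace_mul_comm]
    have h2 : (Q * M * Q).trace = (M * Q).trace := by
      rw [Matrix.trace_mul_cycle, hQQ, Matrix.trace_mul_comm]
    rw [h1, h2, ← Matrix.trace_add, ← Matrix.mul_add, add_comm P Q, hPQ, Matrix.mul_one]
  have hsucc : ∀ k, ρ (k + 1) = P * krausMap E (ρ k) * P := fun k =>
    Function.iterate_succ_apply' F k _
  have hρpsd : ∀ i, (ρ i).PosSemidef := by
    intro i
    induction i with
    | zero => exact outer_psd ψ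
    | succ k ih =>
      rw [hsucc k]
      have := (kraus_psd (E := E) ih).mul_mul_conjTranspose_same P
      rwa [hPh] at this
  have hρB : ∀ i, matSupp (ρ i) ≤ B := by
    intro i
    induction i with
    | zero => exact matSupp_outer_le hψ
    | succ k ih =>
      rw [hsucc k]
      exact matSupp_PNP_le hXB (hB.2.1 _ (hρpsd k) ih)
  set t : ℕ → ℂ := fun i => (ρ i).trace with htdef
  set r : ℕ → ℝ := fun i => (t i).re with hrdef
  have htreal : ∀ i, t i = ((r i : ℝ) : ℂ) := fun i => psd_trace_real (hρpsd i)
  have hr0 : ∀ i, 0 ≤ r i := fun i => by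
    have := psd_trace_nonneg (hρpsd i)
    rw [Complex.nonneg_iff] at this
    exact this.1
  have hQMQpsd : ∀ M : Matrix (Fin d) (Fin d) ℂ, M.PosSemidef → (Q * M * Q).PosSemidef := by
    intro M hM
    have := hM.mul_mul_conjTranspose_same Q
    rwa [hQh] at this
  have hmono : ∀ i, r (i + 1) ≤ r i := by
    intro i
    have h1 := htr_split (krausMap E (ρ i))
    have h3 : (krausMap E (ρ i)).trace = t i := kraus_trace hE _
    have h4 : 0 ≤ ((Q * krausMap E (ρ i) * Q).trace).re := by
      have := psd_trace_nonneg (hQMQpsd (krausMap E (ρ i)) (kraus_psd (hρpsd i)))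
      rw [Complex.nonneg_iff] at this
      exact this.1
    have h5 : t (i + 1) = (P * krausMap E (ρ i) * P).trace := by
      rw [htdef]
      simp only []
      rw [hsucc i]
    have h6 := congrArg Complex.re h1
    rw [h3, ← h5] at h6
    rw [Complex.add_re] at h6
    have : r (i + 1) + ((Q * krausMap E (ρ i) * Q).trace).re = r i := h6
    linarith
  have hanti : Antitone r := antitone_nat_of_succ_le hmono
  set c : ℝ := ⨅ i, r i with hcdef
  have hbdd : BddBelow (Set.range r) := ⟨0, by rintro x ⟨n, rfl⟩; exact hr0 n⟩
  have hc_tend : Tendsto r atTop (nhds c) := tendsto_atTop_ciInf hanti hbdd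
  have ht_tend : Tendsto t atTop (nhds ((c : ℝ) : ℂ)) := by
    have h := (Complex.continuous_ofReal.tendsto c).comp hc_tend
    exact h.congr fun i => (htreal i).symm
  suffices hcz : c = 0 by
    rw [hcz] at ht_tend
    simpa using ht_tend
  by_contra hc
  -- extract a convergent subsequence of ρ
  have hbound : ∀ i, ‖(show Fin d → Fin d → ℂ from ρ i)‖ ≤ r 0 := by
    intro i
    rw [pi_norm_le_iff_of_nonneg (hr0 0)]
    intro j
    rw [pi_norm_le_iff_of_nonneg (hr0 0)]
    intro k
    calc ‖ρ i j k‖ ≤ ((ρ i).trace).re := psd_entry_norm_le (hρpsd i) j k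
    _ = r i := rfl
    _ ≤ r 0 := hanti (Nat.zero_le i)
  obtain ⟨σ, _, φ, hφ, hσtend⟩ := tendsto_subseq_of_bounded
    (Metric.isBounded_closedBall (x := (0 : Fin d → Fin d → ℂ)) (r := r 0))
    (x := fun i => (show Fin d → Fin d → ℂ from ρ i))
    (fun n => by rw [Metric.mem_closedBall, dist_zero_right]; exact hbound n)
  set σM : Matrix (Fin d) (Fin d) ℂ := Matrix.of σ with hσMdef
  have hσ : Tendsto (fun k => ρ (φ k)) atTop (nhds σM) := hσtend
  -- σ is PSD
  have hσh : σM.IsHermitian := by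
    have h1 : Tendsto (fun k => (ρ (φ k))ᴴ) atTop (nhds σMᴴ) :=
      ((continuous_id.matrix_conjTranspose).tendsto _).comp hσ
    have h2 := h1.congr fun k => (hρpsd (φ k)).isHermitian.eq
    exact tendsto_nhds_unique h2 hσ
  have hσpsd : σM.PosSemidef := by
    refine Matrix.PosSemidef.of_dotProduct_mulVec_nonneg hσh ?_
    intro x
    have h1 : Tendsto (fun k => star x ⬝ᵥ (ρ (φ k)) *ᵥ x) atTop
        (nhds (star x ⬝ᵥ σM *ᵥ x)) :=
      ((continuous_const.dotProduct (continuous_id.matrix_mulVec continuous_const)).tendsto _).comp hσ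
    rw [Complex.nonneg_iff]
    constructor
    · exact ge_of_tendsto' ((Complex.continuous_re.tendsto _).comp h1)
        (fun k => (Complex.nonneg_iff.mp ((hρpsd (φ k)).dotProduct_mulVec_nonneg x)).1)
    · have him : Tendsto (fun k => (star x ⬝ᵥ (ρ (φ k)) *ᵥ x).im) atTop
          (nhds ((star x ⬝ᵥ σM *ᵥ x).im)) :=
        (Complex.continuous_im.tendsto _).comp h1
      have hz : Tendsto (fun _ : ℕ => (0:ℝ)) atTop
          (nhds ((star x ⬝ᵥ σM *ᵥ x).im)) :=
        him.congr fun k => ((Complex.nonneg_iff.mp ((hρpsd (φ k)).dotProduct_mulVec_nonneg x)).2).symm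
      exact (tendsto_nhds_unique hz tendsto_const_nhds).symm
  -- σ is supported in B
  have hσB : matSupp σM ≤ B := by
    have h1 : Tendsto (fun k => projMat B * ρ (φ k)) atTop (nhds (projMat B * σM)) :=
      ((continuous_const.matrix_mul continuous_id).tendsto _).comp hσ
    have h2 := h1.congr fun k => projMat_mul_eq_self_iff.mpr (hρB (φ k))
    exact projMat_mul_eq_self_iff.mp (tendsto_nhds_unique h2 hσ)
  -- traces of all F-iterates of σ equal c
  have htrj : ∀ j, (F^[j] σM).trace = ((c : ℝ) : ℂ) := by
    intro j
    have h1 : Tendsto (fun k => (F^[j] (ρ (φ k))).trace) atTop (nhds ((F^[j] σM).trace)) :=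
      (((F_iter_continuous P j).matrix_trace).tendsto _).comp hσ
    have h2 : ∀ k, (F^[j] (ρ (φ k))).trace = t (φ k + j) := by
      intro k
      have : ρ (φ k + j) = F^[j] (ρ (φ k)) := by
        rw [hρdef]
        simp only []
        rw [add_comm, Function.iterate_add_apply]
      rw [htdef]
      simp only []
      rw [this]
    have h3 : Tendsto (fun k => t (φ k + j)) atTop (nhds ((c : ℝ) : ℂ)) :=
      ht_tend.comp (tendsto_atTop_mono (fun k => (hφ.id_le k).trans (Nat.le_add_right _ _))
        tendsto_id)
    exact tendsto_nhds_unique (h1.congr h2) h3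
  -- the key step lemma
  have hstep : ∀ τ : Matrix (Fin d) (Fin d) ℂ, τ.PosSemidef →
      (P * krausMap E τ * P).trace = τ.trace →
      Q * krausMap E τ = 0 ∧ P * krausMap E τ * P = krausMap E τ := by
    intro τ hτ htr
    have hK : (krausMap E τ).PosSemidef := kraus_psd hτ
    have hsplit := htr_split (krausMap E τ)
    have hKtr : (krausMap E τ).trace = τ.trace := kraus_trace hE τ
    have hQ0 : (Q * krausMap E τ * Q).trace = 0 := by
      have h5 : (Q * krausMap E τ * Q).trace
          = (krausMap E τ).trace - (P * krausMap E τ * P).trace := eq_sub_of_add_eq' hsplit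
      rw [h5, hKtr, htr, sub_self]
    have hQKQ : Q * krausMap E τ * Q = 0 := psd_zero_of_trace (hQMQpsd _ hK) hQ0
    obtain ⟨hKQ, hQK⟩ := psd_conj_eq_zero hK hQh hQKQ
    refine ⟨hQK, ?_⟩
    have hP1 : P = 1 - Q := eq_sub_of_add_eq' hPQ
    rw [hP1, Matrix.sub_mul, Matrix.one_mul, hQK, sub_zero, Matrix.mul_sub, Matrix.mul_one,
      hKQ, sub_zero]
  -- F-iterates of σ agree with krausMap-iterates
  have hiter : ∀ j, F^[j] σM = (krausMap E)^[j] σM := by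
    intro j
    induction j with
    | zero => rfl
    | succ k ih =>
      have hτ : ((krausMap E)^[k] σM).PosSemidef := kraus_iter_psd hσpsd k
      have hF : F^[k+1] σM = P * krausMap E ((krausMap E)^[k] σM) * P := by
        rw [Function.iterate_succ_apply', ih]
      have htrk : (P * krausMap E ((krausMap E)^[k] σM) * P).trace
          = ((krausMap E)^[k] σM).trace := by
        rw [← hF, htrj (k+1), ← ih]
        have : (F^[k] σM).trace = ((c:ℝ):ℂ) := htrj k
        rw [this]
      have hs := hstep _ hτ htrk
      rw [hF, hs.2, Function.iterate_succ_apply']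
  have hQK : ∀ j, Q * ((krausMap E)^[j+1] σM) = 0 := by
    intro j
    have hτ : ((krausMap E)^[j] σM).PosSemidef := kraus_iter_psd hσpsd j
    have hF : F^[j+1] σM = P * krausMap E ((krausMap E)^[j] σM) * P := by
      rw [Function.iterate_succ_apply', hiter j]
    have htrk : (P * krausMap E ((krausMap E)^[j] σM) * P).trace
        = ((krausMap E)^[j] σM).trace := by
      rw [← hF, htrj (j+1), ← hiter j]
      have : (F^[j] σM).trace = ((c:ℝ):ℂ) := htrj j
      rw [this]
    have hs := hstep _ hτ htrk
    rw [Function.iterate_succ_apply']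
    exact hs.1
  -- the state after one step
  set σ' : Matrix (Fin d) (Fin d) ℂ := krausMap E σM with hσ'def
  have hσ'psd : σ'.PosSemidef := kraus_psd hσpsd
  have hσ'tr : σ'.trace = ((c : ℝ) : ℂ) := by
    rw [hσ'def, kraus_trace hE]
    exact htrj 0
  have hσ'ne : σ' ≠ 0 := by
    intro h
    apply hc
    have : σ'.trace = 0 := by rw [h]; simp
    rw [hσ'tr] at this
    exact_mod_cast this
  have hσ'B : matSupp σ' ≤ B := hB.2.1 σM hσpsd hσB
  -- pick a nonzero vector in the support of σ'
  have hex : ∃ x : Fin d → ℂ, σ' *ᵥ x ≠ 0 := by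
    by_contra h
    push_neg at h
    apply hσ'ne
    ext i j
    have := congrFun (h (Pi.single j 1)) i
    simpa [Matrix.mulVec_single] using this
  obtain ⟨x0, hx0⟩ := hex
  set v : EuclideanSpace ℂ (Fin d) := (WithLp.equiv 2 (Fin d → ℂ)).symm (σ' *ᵥ x0) with hvdef
  have hv : v ∈ matSupp σ' := mem_matSupp.mpr ⟨x0, rfl⟩
  have hv0 : v ≠ 0 := by
    intro h
    apply hx0
    have := congrArg (WithLp.equiv 2 (Fin d → ℂ)) h
    simpa [hvdef] using this
  have hvB : v ∈ B := hσ'B hv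
  obtain ⟨c', hc'0, hc'nn, hdom⟩ := outer_le_smul hσ'psd hv hv0
  have hreach := hB.2.2 v hvB hv0
  have hsupps : ∀ n, matSupp ((krausMap E)^[n] (outer v)) ≤ Xᗮ := by
    intro n
    have hpsd1 : ((krausMap E)^[n] (outer v)).PosSemidef := kraus_iter_psd (outer_psd v) n
    have hpsd2 : ((krausMap E)^[n] (c' • σ')).PosSemidef := by
      rw [kraus_iter_smul]
      exact psd_smul_nonneg (kraus_iter_psd hσ'psd n) hc'nn
    have h1 : matSupp ((krausMap E)^[n] (outer v)) ≤ matSupp ((krausMap E)^[n] (c' • σ')) :=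
      psd_matSupp_le_of_le hpsd1 hpsd2 (kraus_iter_mono hdom n)
    have h2 : matSupp ((krausMap E)^[n] (c' • σ')) = matSupp ((krausMap E)^[n] σ') := by
      rw [kraus_iter_smul, matSupp_smul hc'0]
    have h3 : matSupp ((krausMap E)^[n] σ') ≤ Xᗮ := by
      have he : (krausMap E)^[n] σ' = (krausMap E)^[n+1] σM := by
        rw [hσ'def, Function.iterate_succ_apply]
      rw [he]
      exact matSupp_le_orthogonal_of_projMat_mul_eq_zero (hQK n)
    exact (h1.trans_eq h2).trans h3
  have hRle : Reach E (outer v) ≤ Xᗮ := iSup_le hsupps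
  rw [hreach] at hRle
  have hXX : X ≤ Xᗮ := le_trans hXB hRle
  apply hX
  rw [Submodule.eq_bot_iff]
  intro y hy
  have h2 : (inner ℂ y y : ℂ) = 0 := (Submodule.mem_orthogonal X y).mp (hXX hy) y hy
  exact inner_self_eq_zero.mp h2
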